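/- arXiv:2012.01400 — 3 statements merged into one kernel-verified Lean document; each statement's English description precedes it below -/
import Mathlib

section
/- For every β > 10 and every a ∈ [0, 1/2], the variance of the integer-valued Gaussian with parameters (a, β) satisfies Var^{IG}(a, β) ≥ (1/16)·exp(−β(1−2a)/2). -/
set_option maxHeartbeats 1000000


noncomputable section
open Real

/-- Normalization constant of the integer-valued Gaussian with parameters `(a, β)`. -/
def ZIG (a β : ℝ) : ℝ := ∑' n : ℤ, Real.exp (-β * ((n : ℝ) - a) ^ 2 / 2)

/-- Mean of the integer-valued Gaussian with parameters `(a, β)`. -/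
def muIG (a β : ℝ) : ℝ :=
  (∑' n : ℤ, (n : ℝ) * Real.exp (-β * ((n : ℝ) - a) ^ 2 / 2)) / ZIG a β

/-- Variance of the integer-valued Gaussian with parameters `(a, β)`. -/
def VarIG (a β : ℝ) : ℝ :=
  (∑' n : ℤ, ((n : ℝ) - muIG a β) ^ 2 * Real.exp (-β * ((n : ℝ) - a) ^ 2 / 2)) / ZIG a β

/-- Summability of quadratic-times-geometric sequences over `ℤ`. -/
lemma sumAuxIG (A C : ℝ) {r : ℝ} (hr : ‖r‖ < 1) :
    Summable (fun n : ℤ => (A * ((n.natAbs : ℝ)) ^ 2 + C) * r ^ n.natAbs) := by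
  have h1 : Summable (fun k : ℕ => (A * ((k : ℝ)) ^ 2 + C) * r ^ k) := by
    have h2 : Summable (fun k : ℕ => (k : ℝ) ^ 2 * r ^ k) := by
      exact_mod_cast summable_pow_mul_geometric_of_norm_lt_one 2 hr
    exact ((h2.mul_left A).add ((summable_geometric_of_norm_lt_one hr).mul_left C)).congr
      (fun k => by ring)
  apply Summable.of_nat_of_neg
  · simpa using h1
  · simpa using h1

/-- Bound on the sum of `r^|n|` over the integers. -/
lemma tsumGeomIntIG {r : ℝ} (h0 : 0 ≤ r) (hr : r ≤ 1 / 2) :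
    ∑' n : ℤ, r ^ n.natAbs ≤ 3 := by
  have hr1 : r < 1 := by linarith
  have hnat : Summable (fun k : ℕ => r ^ k) := summable_geometric_of_lt_one h0 hr1
  have h1 : Summable (fun k : ℕ => r ^ ((k : ℤ)).natAbs) := by simpa using hnat
  have h2 : Summable (fun k : ℕ => r ^ (-(k : ℤ)).natAbs) := by simpa using hnat
  have heq := Summable.tsum_of_nat_of_neg (f := fun n : ℤ => r ^ n.natAbs) h1 h2
  have hge : ∑' k : ℕ, r ^ k = (1 - r)⁻¹ := tsum_geometric_of_lt_one h0 hr1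
  have hval : (∑' k : ℕ, r ^ ((k : ℤ)).natAbs) = (1 - r)⁻¹ := by
    simpa using hge
  have hval2 : (∑' k : ℕ, r ^ (-(k : ℤ)).natAbs) = (1 - r)⁻¹ := by
    simpa using hge
  have hinv : (1 - r)⁻¹ ≤ 2 := by
    rw [inv_le_comm₀ (by linarith) (by norm_num)]
    linarith
  rw [heq, hval, hval2]
  have h00 : (fun n : ℤ => r ^ n.natAbs) 0 = 1 := by norm_num
  rw [show r ^ Int.natAbs 0 = 1 by norm_num]
  linarith

/-- Proposition 2.2: for `β > 10` and `a ∈ [0, 1/2]`,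
`Var^{IG}(a, β) ≥ (1/16)·exp(−β(1−2a)/2)`. -/
theorem varIG_lower_bound (β : ℝ) (hβ : 10 < β) (a : ℝ) (ha : a ∈ Set.Icc (0 : ℝ) (1 / 2)) :
    VarIG a β ≥ (1 / 16) * Real.exp (-β * (1 - 2 * a) / 2) := by
  obtain ⟨ha0, ha1⟩ := ha
  have hβ0 : (0 : ℝ) < β := by linarith
  set r : ℝ := Real.exp (-5) with hr_def
  have hr0 : 0 < r := Real.exp_pos _
  have hrhalf : r ≤ 1 / 2 := by
    rw [hr_def, Real.exp_neg]
    have h2 : (2 : ℝ) ≤ Real.exp 5 := by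
      have := Real.add_one_le_exp (5 : ℝ); linarith
    rw [inv_le_comm₀ (by positivity) (by norm_num)]
    linarith
  have hr1 : r < 1 := by linarith
  have hrnorm : ‖r‖ < 1 := by rw [Real.norm_eq_abs, abs_of_pos hr0]; exact hr1
  set w : ℤ → ℝ := fun n => Real.exp (-β * ((n : ℝ) - a) ^ 2 / 2) with hw_def
  have hwpos : ∀ n, 0 < w n := fun n => Real.exp_pos _
  have hsplit : ∀ n : ℤ, w n = w 0 * Real.exp (-β * ((n : ℝ) ^ 2 - 2 * (n : ℝ) * a) / 2) := by
    intro n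
    rw [hw_def]
    simp only
    rw [← Real.exp_add]
    congr 1
    push_cast
    ring
  have hw0le1 : w 0 ≤ 1 := by
    rw [hw_def]
    simp only
    rw [← Real.exp_zero]
    apply Real.exp_le_exp.mpr
    nlinarith [sq_nonneg ((0 : ℤ) - a : ℝ)]
  have hw10 : w 1 ≤ w 0 := by
    rw [hsplit 1]
    nth_rewrite 2 [show w 0 = w 0 * 1 by ring]
    apply mul_le_mul_of_nonneg_left _ (hwpos 0).le
    rw [← Real.exp_zero]
    apply Real.exp_le_exp.mpr
    nlinarith
  -- tail bound for n ∉ {0, 1}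
  have htail : ∀ n : ℤ, n ≠ 0 → n ≠ 1 →
      Real.exp (-β * ((n : ℝ) ^ 2 - 2 * (n : ℝ) * a) / 2) ≤ r ^ n.natAbs := by
    intro n hn0 hn1
    have hrpow : r ^ n.natAbs = Real.exp ((n.natAbs : ℝ) * (-5)) := by
      rw [Real.exp_nat_mul]
    rw [hrpow]
    apply Real.exp_le_exp.mpr
    have habs : ((n.natAbs : ℝ)) = |(n : ℝ)| := by
      rw [Nat.cast_natAbs, Int.cast_abs]
    rw [habs]
    set m : ℝ := (n : ℝ) with hm_def
    have hcase : n ≤ -1 ∨ 2 ≤ n := by omega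
    rcases hcase with h | h
    · have hm1 : m ≤ -1 := by rw [hm_def]; exact_mod_cast (by exact_mod_cast h : (n : ℝ) ≤ -1)
      rw [abs_of_nonpos (by linarith)]
      have h1 : 0 ≤ -(2 * m * a) := by nlinarith
      have h3 : -m ≤ m ^ 2 := by nlinarith [mul_nonneg (by linarith : (0:ℝ) ≤ -m) (by linarith : (0:ℝ) ≤ -(m+1))]
      have h4 : 0 ≤ m ^ 2 - 2 * m * a := by linarith
      nlinarith [mul_nonneg (by linarith : (0:ℝ) ≤ β - 10) h4]
    · have hm2 : (2 : ℝ) ≤ m := by rw [hm_def]; exact_mod_cast (by exact_mod_cast h : (2 : ℝ) ≤ (n:ℝ))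
      rw [abs_of_nonneg (by linarith)]
      have h1 : m ^ 2 - m ≤ m ^ 2 - 2 * m * a := by nlinarith
      have h2 : m ≤ m ^ 2 - m := by nlinarith
      have h4 : 0 ≤ m ^ 2 - 2 * m * a := by linarith
      nlinarith [mul_nonneg (by linarith : (0:ℝ) ≤ β - 10) h4]
  -- global bound with loss e^5
  have hall : ∀ n : ℤ, w n ≤ Real.exp 5 * r ^ n.natAbs := by
    intro n
    have he5 : (1 : ℝ) ≤ Real.exp 5 := by
      rw [← Real.exp_zero]; exact Real.exp_le_exp.mpr (by norm_num)
    by_cases hn0 : n = 0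
    · subst hn0; simpa using le_trans hw0le1 he5
    by_cases hn1 : n = 1
    · subst hn1
      have : Real.exp 5 * r ^ (1 : ℤ).natAbs = 1 := by
        simp [hr_def, ← Real.exp_add]
      rw [this]
      exact le_trans hw10 hw0le1
    · rw [hsplit n]
      calc w 0 * Real.exp (-β * ((n : ℝ) ^ 2 - 2 * (n : ℝ) * a) / 2)
          ≤ 1 * (r ^ n.natAbs) := by
            apply mul_le_mul hw0le1 (htail n hn0 hn1) (Real.exp_pos _).le (by norm_num)
        _ ≤ Real.exp 5 * r ^ n.natAbs := by
            apply mul_le_mul_of_nonneg_right he5 (by positivity)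
  -- the comparison function for Z
  set g : ℤ → ℝ := fun n => (if n = 0 ∨ n = 1 then (1 : ℝ) else 0) + r ^ n.natAbs with hg_def
  have hgeom_sum : Summable (fun n : ℤ => r ^ n.natAbs) := by
    have := sumAuxIG 0 1 hrnorm
    exact this.congr (fun n => by ring)
  have hind_sum : Summable (fun n : ℤ => (if n = 0 ∨ n = 1 then (1 : ℝ) else 0)) := by
    apply summable_of_ne_finset_zero (s := ({0, 1} : Finset ℤ))
    intro n hn
    simp only [Finset.mem_insert, Finset.mem_singleton] at hn
    simp [not_or.mp hn]
  have hg_sum : Summable g := hind_sum.add hgeom_sum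
  have hw_le_g : ∀ n : ℤ, w n ≤ w 0 * g n := by
    intro n
    by_cases hn0 : n = 0
    · subst hn0
      have hg0 : g 0 = 2 := by simp [hg_def]; norm_num
      rw [hg0]; nlinarith [hwpos 0]
    by_cases hn1 : n = 1
    · subst hn1
      have hg1 : g 1 = 1 + r := by simp [hg_def]
      rw [hg1]; nlinarith [hwpos 0, hw10, hr0]
    · have hgn : g n = r ^ n.natAbs := by
        simp only [hg_def, if_neg (by tauto : ¬(n = 0 ∨ n = 1)), zero_add]
      rw [hgn, hsplit n]
      exact mul_le_mul_of_nonneg_left (htail n hn0 hn1) (hwpos 0).le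
  have hw_sum : Summable w :=
    Summable.of_nonneg_of_le (fun n => (hwpos n).le) hw_le_g (hg_sum.mul_left (w 0))
  -- Z bound
  have hZdef : ZIG a β = ∑' n : ℤ, w n := rfl
  have hind_tsum : (∑' n : ℤ, (if n = 0 ∨ n = 1 then (1 : ℝ) else 0)) = 2 := by
    rw [tsum_eq_sum (s := ({0, 1} : Finset ℤ))]
    · rw [Finset.sum_pair (by norm_num : (0:ℤ) ≠ 1)]
      norm_num
    · intro n hn
      simp only [Finset.mem_insert, Finset.mem_singleton] at hn
      simp [not_or.mp hn]
  have hg_tsum : (∑' n : ℤ, g n) ≤ 5 := by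
    rw [hg_def, Summable.tsum_add hind_sum hgeom_sum, hind_tsum]
    linarith [tsumGeomIntIG hr0.le hrhalf]
  have hZle : ZIG a β ≤ 8 * w 0 := by
    rw [hZdef]
    calc ∑' n : ℤ, w n ≤ ∑' n : ℤ, w 0 * g n :=
          Summable.tsum_le_tsum hw_le_g hw_sum (hg_sum.mul_left (w 0))
      _ = w 0 * ∑' n : ℤ, g n := tsum_mul_left
      _ ≤ w 0 * 5 := mul_le_mul_of_nonneg_left hg_tsum (hwpos 0).le
      _ ≤ 8 * w 0 := by nlinarith [hwpos 0]
  have hZpos : 0 < ZIG a β := by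
    rw [hZdef]
    exact Summable.tsum_pos hw_sum (fun n => (hwpos n).le) 0 (hwpos 0)
  -- numerator
  rw [ge_iff_le]
  unfold VarIG
  obtain ⟨μ, hμ⟩ : ∃ x : ℝ, muIG a β = x := ⟨_, rfl⟩
  rw [hμ]
  show (1 : ℝ) / 16 * Real.exp (-β * (1 - 2 * a) / 2) ≤ (∑' n : ℤ, ((n : ℝ) - μ) ^ 2 * w n) / ZIG a β
  have hterm_nonneg : ∀ n : ℤ, 0 ≤ ((n : ℝ) - μ) ^ 2 * w n :=
    fun n => mul_nonneg (sq_nonneg _) (hwpos n).le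
  have hg2 := sumAuxIG (2 * Real.exp 5) (2 * μ ^ 2 * Real.exp 5) hrnorm
  have hle2 : ∀ n : ℤ, ((n : ℝ) - μ) ^ 2 * w n ≤
      (2 * Real.exp 5 * ((n.natAbs : ℝ)) ^ 2 + 2 * μ ^ 2 * Real.exp 5) * r ^ n.natAbs := by
    intro n
    have hnat2 : ((n.natAbs : ℝ)) ^ 2 = ((n : ℝ)) ^ 2 := by
      rw [Nat.cast_natAbs, Int.cast_abs, sq_abs]
    have h1 : ((n : ℝ) - μ) ^ 2 ≤ 2 * ((n : ℝ)) ^ 2 + 2 * μ ^ 2 := by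
      nlinarith [sq_nonneg ((n : ℝ) + μ)]
    calc ((n : ℝ) - μ) ^ 2 * w n
        ≤ (2 * ((n : ℝ)) ^ 2 + 2 * μ ^ 2) * (Real.exp 5 * r ^ n.natAbs) := by
          apply mul_le_mul h1 (hall n) (hwpos n).le (by positivity)
      _ = (2 * Real.exp 5 * ((n.natAbs : ℝ)) ^ 2 + 2 * μ ^ 2 * Real.exp 5) * r ^ n.natAbs := by
          rw [hnat2]; ring
  have hN_sum : Summable (fun n : ℤ => ((n : ℝ) - μ) ^ 2 * w n) :=
    Summable.of_nonneg_of_le hterm_nonneg hle2 hg2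
  have hNlb : w 1 / 2 ≤ ∑' n : ℤ, ((n : ℝ) - μ) ^ 2 * w n := by
    have hsum_le := Summable.sum_le_tsum ({0, 1} : Finset ℤ) (fun n _ => hterm_nonneg n) hN_sum
    have hsumval : (∑ n ∈ ({0, 1} : Finset ℤ), ((n : ℝ) - μ) ^ 2 * w n)
        = ((0 : ℝ) - μ) ^ 2 * w 0 + ((1 : ℝ) - μ) ^ 2 * w 1 := by
      rw [Finset.sum_pair (by norm_num : (0 : ℤ) ≠ 1)]
      norm_num
    rw [hsumval] at hsum_le
    have hq : μ ^ 2 * w 1 ≤ μ ^ 2 * w 0 := mul_le_mul_of_nonneg_left hw10 (sq_nonneg μ)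
    have hcoef : (0 : ℝ) ≤ (μ ^ 2 + (1 - μ) ^ 2 - 1 / 2) := by nlinarith [sq_nonneg (2 * μ - 1)]
    nlinarith [mul_nonneg hcoef (hwpos 1).le]
  have hw1 : w 1 = w 0 * Real.exp (-β * (1 - 2 * a) / 2) := by
    rw [hsplit 1]; norm_num
  rw [le_div_iff₀ hZpos]
  calc 1 / 16 * Real.exp (-β * (1 - 2 * a) / 2) * ZIG a β
      ≤ 1 / 16 * Real.exp (-β * (1 - 2 * a) / 2) * (8 * w 0) := by
        apply mul_le_mul_of_nonneg_left hZle (by positivity)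
    _ = w 1 / 2 := by rw [hw1]; ring
    _ ≤ ∑' n : ℤ, ((n : ℝ) - μ) ^ 2 * w n := hNlb
end
end

section
/- For every β ≥ 1/3 one has M(β) ≥ 2β·exp(−(2π)²β/2). Moreover there exist constants c > 0, C > 0 and β₁ such that for all β ≥ β₁, c·β·exp(−(2π)²β/2) ≤ M(β) ≤ C·β·exp(−(2π)²β/2). -/
noncomputable section
open Real

/-- The error function `M(β) = (2π)²β · inf_{a∈[0,1/2]} Var^{IG}(a, (2π)²β)`. -/
def Merr (β : ℝ) : ℝ :=
  (2 * π) ^ 2 * β * sInf ((fun a => VarIG a ((2 * π) ^ 2 * β)) '' Set.Icc (0 : ℝ) (1 / 2))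

namespace MerrAux

lemma exp_term_le {b : ℝ} (hb : 12 ≤ b) {x : ℝ} {n : ℕ} (hx : (n : ℝ) ^ 2 ≤ 4 * x ^ 2) :
    Real.exp (-b * x ^ 2 / 2) ≤ (2 / 5 : ℝ) ^ n := by
  have hn : (n : ℝ) ≤ (n : ℝ) ^ 2 := by
    have : n ≤ n ^ 2 := Nat.le_self_pow two_ne_zero n
    exact_mod_cast this
  have h1 : Real.exp (-b * x ^ 2 / 2) ≤ Real.exp ((n : ℕ) * (-(3 / 2) : ℝ)) := by
    apply Real.exp_le_exp.2
    nlinarith [sq_nonneg x, sq_nonneg (n : ℝ)]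
  have h2 : Real.exp ((n : ℕ) * (-(3 / 2) : ℝ)) = Real.exp (-(3 / 2)) ^ n :=
    Real.exp_nat_mul _ n
  have h3 : Real.exp (-(3 / 2) : ℝ) ≤ 2 / 5 := by
    have h4 : (5 / 2 : ℝ) ≤ Real.exp (3 / 2) := by
      have := Real.add_one_le_exp (3 / 2 : ℝ); linarith
    rw [Real.exp_neg]
    rw [inv_le_comm₀ (Real.exp_pos _) (by norm_num)] at *
    · linarith
  calc Real.exp (-b * x ^ 2 / 2) ≤ Real.exp (-(3 / 2) : ℝ) ^ n := h2 ▸ h1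
    _ ≤ (2 / 5 : ℝ) ^ n := pow_le_pow_left₀ (Real.exp_nonneg _) h3 n

variable {b a c : ℝ}

lemma geom_summable : Summable fun n : ℕ => (2 / 5 : ℝ) ^ n :=
  summable_geometric_of_lt_one (by norm_num) (by norm_num)

lemma summable_Z_nat (hb : 12 ≤ b) (x : ℕ → ℝ)
    (hx1 : ∀ n : ℕ, (n : ℝ) ^ 2 ≤ 4 * (x n - a) ^ 2) :
    Summable fun n : ℕ => Real.exp (-b * (x n - a) ^ 2 / 2) := by
  apply Summable.of_nonneg_of_le (fun n => Real.exp_nonneg _)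
    (fun n => exp_term_le hb (hx1 n)) geom_summable

lemma summable_B (c : ℝ) : Summable fun n : ℕ => (2 * (n : ℝ) ^ 2 + 2 * c ^ 2) * (2 / 5 : ℝ) ^ n := by
  have h1 : Summable fun n : ℕ => (n : ℝ) ^ 2 * (2 / 5 : ℝ) ^ n := by
    simpa using summable_pow_mul_geometric_of_norm_lt_one (R := ℝ) 2 (r := (2/5 : ℝ))
      (by rw [Real.norm_eq_abs, abs_of_nonneg (by norm_num)]; norm_num)
  have := (h1.mul_left 2).add (geom_summable.mul_left (2 * c ^ 2))
  apply this.congr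
  intro n; ring

lemma summable_V_nat (hb : 12 ≤ b) (c : ℝ) (x : ℕ → ℝ)
    (hx1 : ∀ n : ℕ, (n : ℝ) ^ 2 ≤ 4 * (x n - a) ^ 2)
    (hx2 : ∀ n : ℕ, (x n) ^ 2 ≤ (n : ℝ) ^ 2) :
    Summable fun n : ℕ => (x n - c) ^ 2 * Real.exp (-b * (x n - a) ^ 2 / 2) := by
  apply Summable.of_nonneg_of_le
    (fun n => mul_nonneg (sq_nonneg _) (Real.exp_nonneg _)) (fun n => ?_) (summable_B c)
  have h1 : (x n - c) ^ 2 ≤ 2 * (n : ℝ) ^ 2 + 2 * c ^ 2 := by nlinarith [hx2 n, sq_nonneg (x n + c)]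
  exact mul_le_mul h1 (exp_term_le hb (hx1 n)) (Real.exp_nonneg _) (by positivity)

lemma hx_plus (ha1 : 0 ≤ a) (ha2 : a ≤ 1 / 2) :
    ∀ n : ℕ, (n : ℝ) ^ 2 ≤ 4 * ((n : ℝ) - a) ^ 2 := by
  intro n
  rcases Nat.eq_zero_or_pos n with h | h
  · subst h; simp; positivity
  · have h1 : (1 : ℝ) ≤ (n : ℝ) := by exact_mod_cast h
    nlinarith

lemma hx_minus (ha1 : 0 ≤ a) : ∀ n : ℕ, (n : ℝ) ^ 2 ≤ 4 * (-(n : ℝ) - a) ^ 2 := by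
  intro n
  have h1 : (0 : ℝ) ≤ (n : ℝ) := Nat.cast_nonneg n
  nlinarith

lemma summable_Z_int (hb : 12 ≤ b) (ha1 : 0 ≤ a) (ha2 : a ≤ 1 / 2) :
    Summable fun n : ℤ => Real.exp (-b * ((n : ℝ) - a) ^ 2 / 2) := by
  apply Summable.of_nat_of_neg
  · exact (summable_Z_nat hb (fun n : ℕ => (n : ℝ)) (hx_plus ha1 ha2)).congr
      (fun n => by push_cast; ring_nf)
  · exact (summable_Z_nat hb (fun n : ℕ => -(n : ℝ)) (hx_minus ha1)).congr
      (fun n => by push_cast; ring_nf)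

lemma summable_V_int (hb : 12 ≤ b) (ha1 : 0 ≤ a) (ha2 : a ≤ 1 / 2) (c : ℝ) :
    Summable fun n : ℤ => ((n : ℝ) - c) ^ 2 * Real.exp (-b * ((n : ℝ) - a) ^ 2 / 2) := by
  apply Summable.of_nat_of_neg
  · exact (summable_V_nat hb c (fun n : ℕ => (n : ℝ)) (hx_plus ha1 ha2)
      (fun n => le_refl _)).congr (fun n => by push_cast; ring_nf)
  · exact (summable_V_nat hb c (fun n : ℕ => -(n : ℝ)) (hx_minus ha1)
      (fun n => le_of_eq (by ring))).congr (fun n => by push_cast; ring_nf)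

lemma Z_pos (hb : 12 ≤ b) (ha1 : 0 ≤ a) (ha2 : a ≤ 1 / 2) : 0 < ZIG a b := by
  have h := Summable.le_tsum (summable_Z_int hb ha1 ha2) 0 (fun j _ => Real.exp_nonneg _)
  have h2 : (0:ℝ) < Real.exp (-b * (((0:ℤ):ℝ) - a) ^ 2 / 2) := Real.exp_pos _
  exact lt_of_lt_of_le h2 h

lemma Z_le (hb : 12 ≤ b) (ha1 : 0 ≤ a) (ha2 : a ≤ 1 / 2) : ZIG a b ≤ 10 / 3 := by
  set F : ℤ → ℝ := fun n : ℤ => Real.exp (-b * ((n : ℝ) - a) ^ 2 / 2) with hF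
  have hp : Summable fun n : ℕ => F (n : ℤ) :=
    (summable_Z_nat hb (fun n : ℕ => (n : ℝ)) (hx_plus ha1 ha2)).congr
      (fun n => by simp only [hF]; push_cast; ring_nf)
  have hm : Summable fun n : ℕ => F (-(n : ℤ)) :=
    (summable_Z_nat hb (fun n : ℕ => -(n : ℝ)) (hx_minus ha1)).congr
      (fun n => by simp only [hF]; push_cast; ring_nf)
  have e1 : (∑' n : ℕ, F (n : ℤ)) ≤ 5 / 3 := by
    have h := Summable.tsum_le_tsum (g := fun n : ℕ => (2/5:ℝ)^n)
      (fun n => exp_term_le hb (by simpa using hx_plus ha1 ha2 n)) hp geom_summable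
    rw [tsum_geometric_of_lt_one (by norm_num) (by norm_num)] at h
    linarith
  have e2 : (∑' n : ℕ, F (-(n : ℤ))) ≤ 5 / 3 := by
    have h := Summable.tsum_le_tsum (g := fun n : ℕ => (2/5:ℝ)^n)
      (fun n => exp_term_le hb (by simpa using hx_minus ha1 n)) hm geom_summable
    rw [tsum_geometric_of_lt_one (by norm_num) (by norm_num)] at h
    linarith
  have e0 : (0:ℝ) ≤ F 0 := Real.exp_nonneg _
  have hZ : ZIG a b = (∑' n : ℕ, F (n : ℤ)) + (∑' n : ℕ, F (-(n : ℤ))) - F 0 :=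
    Summable.tsum_of_nat_of_neg hp hm
  rw [hZ]; linarith

lemma Var_lb (hb : 12 ≤ b) (ha1 : 0 ≤ a) (ha2 : a ≤ 1 / 2) :
    Real.exp (-b / 2) / (2 * π ^ 2) ≤ VarIG a b := by
  have hb0 : (0:ℝ) < b := by linarith
  have hZpos : 0 < ZIG a b := Z_pos hb ha1 ha2
  have hZle : ZIG a b ≤ π ^ 2 := by
    have h9 : (9:ℝ) ≤ π ^ 2 := by nlinarith [Real.pi_gt_three]
    have := Z_le hb ha1 ha2
    linarith
  unfold VarIG
  set μ := muIG a b with hμ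
  set f : ℤ → ℝ := fun n => ((n : ℝ) - μ) ^ 2 * Real.exp (-b * ((n : ℝ) - a) ^ 2 / 2) with hf
  have hfs : Summable f := summable_V_int hb ha1 ha2 μ
  have hterm : ∀ n : ℤ, 0 ≤ f n := fun n => mul_nonneg (sq_nonneg _) (Real.exp_nonneg _)
  have h01 : f 0 + f 1 ≤ ∑' n, f n := by
    have h := Summable.sum_le_tsum ({0, 1} : Finset ℤ) (fun i _ => hterm i) hfs
    rwa [Finset.sum_pair (by norm_num)] at h
  have hf0 : f 0 = μ ^ 2 * Real.exp (-b * ((0:ℝ) - a) ^ 2 / 2) := by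
    simp only [hf, Int.cast_zero]; ring_nf
  have hf1 : f 1 = (1 - μ) ^ 2 * Real.exp (-b * ((1:ℝ) - a) ^ 2 / 2) := by
    simp only [hf, Int.cast_one]
  have e1 : Real.exp (-b * ((1:ℝ) - a) ^ 2 / 2) ≤ Real.exp (-b * ((0:ℝ) - a) ^ 2 / 2) :=
    Real.exp_le_exp.2 (by nlinarith)
  have h2a : (0:ℝ) ≤ b * a * (2 - a) :=
    mul_nonneg (mul_nonneg hb0.le ha1) (by linarith)
  have e2 : Real.exp (-b / 2) ≤ Real.exp (-b * ((1:ℝ) - a) ^ 2 / 2) :=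
    Real.exp_le_exp.2 (by nlinarith [h2a])
  have key : Real.exp (-b / 2) / 2 ≤ ∑' n, f n := by
    have s1 : μ ^ 2 * Real.exp (-b * ((1:ℝ) - a) ^ 2 / 2) ≤ f 0 := by
      rw [hf0]; exact mul_le_mul_of_nonneg_left e1 (sq_nonneg μ)
    have s2 : (1/2 : ℝ) ≤ μ ^ 2 + (1 - μ) ^ 2 := by nlinarith [sq_nonneg (μ - 1/2)]
    have hg1 : 0 < Real.exp (-b * ((1:ℝ) - a) ^ 2 / 2) := Real.exp_pos _
    nlinarith [h01, s1, hf1, mul_le_mul_of_nonneg_right s2 hg1.le,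
      mul_le_mul_of_nonneg_left e2 (show (0:ℝ) ≤ 1/2 by norm_num)]
  have hL0 : 0 ≤ ∑' n, f n := tsum_nonneg hterm
  calc Real.exp (-b / 2) / (2 * π ^ 2) = (Real.exp (-b / 2) / 2) / π ^ 2 := by ring
    _ ≤ (∑' n, f n) / ZIG a b := div_le_div₀ hL0 key hZpos hZle

lemma mu0 : muIG 0 b = 0 := by
  unfold muIG
  have h : (∑' n : ℤ, (n : ℝ) * Real.exp (-b * ((n : ℝ) - 0) ^ 2 / 2)) = 0 := by
    set f : ℤ → ℝ := fun n => (n : ℝ) * Real.exp (-b * ((n : ℝ) - 0) ^ 2 / 2) with hf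
    have h1 : (∑' n : ℤ, f (-n)) = ∑' n : ℤ, f n := (Equiv.neg ℤ).tsum_eq f
    have h2 : ∀ n : ℤ, f (-n) = -f n := by
      intro n
      simp only [hf, Int.cast_neg]
      rw [show (-(n:ℝ) - 0) ^ 2 = ((n:ℝ) - 0) ^ 2 by ring]
      ring
    rw [tsum_congr h2, tsum_neg] at h1
    linarith
  rw [h, zero_div]

lemma term_le_aux (hb : 12 ≤ b) (n : ℕ) :
    ((n : ℝ) + 1) ^ 2 * Real.exp (-b * ((n : ℝ) + 1) ^ 2 / 2) ≤
      Real.exp (-b / 2) * (1 / 3 : ℝ) ^ n := by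
  have hn : (0:ℝ) ≤ (n : ℝ) := Nat.cast_nonneg n
  have h1 : ((n : ℝ) + 1) ^ 2 ≤ Real.exp (((n : ℝ) + 1) ^ 2 - 1) := by
    have := Real.add_one_le_exp (((n : ℝ) + 1) ^ 2 - 1); linarith
  have h2 : ((n : ℝ) + 1) ^ 2 * Real.exp (-b * ((n : ℝ) + 1) ^ 2 / 2) ≤
      Real.exp ((((n : ℝ) + 1) ^ 2 - 1) + (-b * ((n : ℝ) + 1) ^ 2 / 2)) := by
    rw [Real.exp_add]
    exact mul_le_mul_of_nonneg_right h1 (Real.exp_nonneg _)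
  have h3 : (((n : ℝ) + 1) ^ 2 - 1) + (-b * ((n : ℝ) + 1) ^ 2 / 2) ≤ -b / 2 + (n : ℕ) * (-2) := by
    nlinarith [sq_nonneg ((n:ℝ)), mul_nonneg hn hn]
  have h4 : Real.exp (-b / 2 + (n : ℕ) * (-2 : ℝ)) =
      Real.exp (-b / 2) * Real.exp (-2 : ℝ) ^ n := by
    rw [Real.exp_add, Real.exp_nat_mul]
  have h5 : Real.exp (-2 : ℝ) ^ n ≤ (1 / 3 : ℝ) ^ n := by
    apply pow_le_pow_left₀ (Real.exp_nonneg _)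
    have h6 : (3:ℝ) ≤ Real.exp 2 := by have := Real.add_one_le_exp (2:ℝ); linarith
    rw [Real.exp_neg, inv_le_comm₀ (Real.exp_pos _) (by norm_num)]
    linarith
  calc ((n : ℝ) + 1) ^ 2 * Real.exp (-b * ((n : ℝ) + 1) ^ 2 / 2)
      ≤ Real.exp ((((n : ℝ) + 1) ^ 2 - 1) + (-b * ((n : ℝ) + 1) ^ 2 / 2)) := h2
    _ ≤ Real.exp (-b / 2 + (n : ℕ) * (-2 : ℝ)) := Real.exp_le_exp.2 h3
    _ = Real.exp (-b / 2) * Real.exp (-2 : ℝ) ^ n := h4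
    _ ≤ Real.exp (-b / 2) * (1 / 3 : ℝ) ^ n :=
        mul_le_mul_of_nonneg_left h5 (Real.exp_nonneg _)

lemma Var0_le (hb : 12 ≤ b) : VarIG 0 b ≤ 3 * Real.exp (-b / 2) := by
  have hZ1 : 1 ≤ ZIG 0 b := by
    unfold ZIG
    have h := Summable.le_tsum (summable_Z_int hb le_rfl (by norm_num)) 0 (fun j _ => Real.exp_nonneg _)
    simpa using h
  unfold VarIG
  rw [mu0]
  set f : ℤ → ℝ := fun n => ((n : ℝ) - 0) ^ 2 * Real.exp (-b * ((n : ℝ) - 0) ^ 2 / 2) with hf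
  have hp : Summable fun n : ℕ => f (n : ℤ) :=
    (summable_V_nat hb 0 (fun n : ℕ => (n : ℝ)) (hx_plus le_rfl (by norm_num))
      (fun n => le_rfl)).congr (fun n => by simp only [hf]; push_cast; ring_nf)
  have hm : Summable fun n : ℕ => f (-(n : ℤ)) :=
    (summable_V_nat hb 0 (fun n : ℕ => -(n : ℝ)) (hx_minus le_rfl)
      (fun n => le_of_eq (by ring))).congr (fun n => by simp only [hf]; push_cast; ring_nf)
  have hsplit : (∑' n : ℤ, f n) = (∑' n : ℕ, f (n : ℤ)) + (∑' n : ℕ, f (-(n : ℤ))) - f 0 :=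
    Summable.tsum_of_nat_of_neg hp hm
  have hsame : (∑' n : ℕ, f (-(n : ℤ))) = ∑' n : ℕ, f (n : ℤ) := by
    apply tsum_congr
    intro n
    simp only [hf, Int.cast_neg, Int.cast_natCast]
    rw [show (-(n:ℝ) - 0) ^ 2 = ((n:ℝ) - 0) ^ 2 by ring]
  have hf00 : f 0 = 0 := by simp [hf]
  have hnat : (∑' n : ℕ, f (n : ℤ)) ≤ (3 / 2 : ℝ) * Real.exp (-b / 2) := by
    rw [Summable.tsum_eq_zero_add hp]
    have hf00' : f ((0:ℕ):ℤ) = 0 := by simp [hf]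
    rw [hf00', zero_add]
    have hshift : Summable fun n : ℕ => f ((n : ℤ) + 1) := by
      have := (summable_nat_add_iff 1).2 hp
      apply this.congr; intro n; push_cast; ring_nf
    have hle : ∀ n : ℕ, f (((n : ℕ) + 1 : ℕ) : ℤ) ≤ Real.exp (-b / 2) * (1 / 3 : ℝ) ^ n := by
      intro n
      have := term_le_aux hb n
      simp only [hf]
      push_cast
      convert this using 3 <;> ring
    have hgeo : Summable fun n : ℕ => Real.exp (-b / 2) * (1 / 3 : ℝ) ^ n :=
      (summable_geometric_of_lt_one (by norm_num) (by norm_num)).mul_left _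
    have h := Summable.tsum_le_tsum hle ((summable_nat_add_iff 1).2 hp) hgeo
    rw [tsum_mul_left, tsum_geometric_of_lt_one (by norm_num) (by norm_num)] at h
    have : Real.exp (-b / 2) * (1 - 1/3 : ℝ)⁻¹ = (3/2 : ℝ) * Real.exp (-b / 2) := by
      norm_num; ring
    rw [this] at h
    linarith
  have hL : (∑' n : ℤ, f n) ≤ 3 * Real.exp (-b / 2) := by
    rw [hsplit, hsame, hf00]
    linarith
  have hL0 : 0 ≤ ∑' n : ℤ, f n :=
    tsum_nonneg (fun n => mul_nonneg (sq_nonneg _) (Real.exp_nonneg _))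
  calc (∑' n : ℤ, f n) / ZIG 0 b ≤ (∑' n : ℤ, f n) / 1 := by
        apply div_le_div_of_nonneg_left hL0 ?_ hZ1
        · linarith
    _ = ∑' n : ℤ, f n := div_one _
    _ ≤ 3 * Real.exp (-b / 2) := hL

lemma b_large {β : ℝ} (hβ : 1 / 3 ≤ β) : 12 ≤ (2 * π) ^ 2 * β := by
  have h9 : (9:ℝ) ≤ π ^ 2 := by nlinarith [Real.pi_gt_three]
  nlinarith

lemma hS_all {β : ℝ} (hβ : 1 / 3 ≤ β) :
    ∀ x ∈ (fun a => VarIG a ((2 * π) ^ 2 * β)) '' Set.Icc (0 : ℝ) (1 / 2),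
      Real.exp (-((2 * π) ^ 2 * β) / 2) / (2 * π ^ 2) ≤ x := by
  rintro x ⟨a, ⟨ha1, ha2⟩, rfl⟩
  exact Var_lb (b_large hβ) ha1 ha2

lemma hmem_all {β : ℝ} : VarIG 0 ((2 * π) ^ 2 * β) ∈
    (fun a => VarIG a ((2 * π) ^ 2 * β)) '' Set.Icc (0 : ℝ) (1 / 2) :=
  ⟨0, ⟨le_rfl, by norm_num⟩, rfl⟩

lemma merr_lb {β : ℝ} (hβ : 1 / 3 ≤ β) :
    2 * β * Real.exp (-(2 * π) ^ 2 * β / 2) ≤ Merr β := by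
  have hβ0 : (0:ℝ) < β := by linarith
  have hπ : π ≠ 0 := Real.pi_ne_zero
  have hinf : Real.exp (-((2 * π) ^ 2 * β) / 2) / (2 * π ^ 2) ≤
      sInf ((fun a => VarIG a ((2 * π) ^ 2 * β)) '' Set.Icc (0 : ℝ) (1 / 2)) :=
    le_csInf ⟨_, hmem_all⟩ (hS_all hβ)
  have h2 := mul_le_mul_of_nonneg_left hinf (show (0:ℝ) ≤ (2 * π) ^ 2 * β by positivity)
  have heq : (2 * π) ^ 2 * β * (Real.exp (-((2 * π) ^ 2 * β) / 2) / (2 * π ^ 2)) =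
      2 * β * Real.exp (-(2 * π) ^ 2 * β / 2) := by
    rw [show -((2 * π) ^ 2 * β) / 2 = -(2 * π) ^ 2 * β / 2 by ring]
    field_simp
  rw [heq] at h2
  exact h2

lemma merr_ub {β : ℝ} (hβ : 1 / 3 ≤ β) :
    Merr β ≤ 12 * π ^ 2 * β * Real.exp (-(2 * π) ^ 2 * β / 2) := by
  have hβ0 : (0:ℝ) < β := by linarith
  have hbdd : BddBelow ((fun a => VarIG a ((2 * π) ^ 2 * β)) '' Set.Icc (0 : ℝ) (1 / 2)) :=
    ⟨_, fun x hx => hS_all hβ x hx⟩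
  have h1 := csInf_le hbdd (hmem_all (β := β))
  have h2 := Var0_le (b_large hβ)
  have h3 := mul_le_mul_of_nonneg_left (h1.trans h2)
    (show (0:ℝ) ≤ (2 * π) ^ 2 * β by positivity)
  have heq : (2 * π) ^ 2 * β * (3 * Real.exp (-((2 * π) ^ 2 * β) / 2)) =
      12 * π ^ 2 * β * Real.exp (-(2 * π) ^ 2 * β / 2) := by
    rw [show -((2 * π) ^ 2 * β) / 2 = -(2 * π) ^ 2 * β / 2 by ring]
    ring
  rw [heq] at h3
  exact h3

end MerrAux

open MerrAux in
/-- Corollary 2.3: `M(β) ≥ 2β·exp(−(2π)²β/2)` for `β ≥ 1/3`, and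
`M(β) ≍ β·exp(−(2π)²β/2)` as `β → ∞`. -/
theorem Merr_asymptotics :
    (∀ β : ℝ, 1 / 3 ≤ β → Merr β ≥ 2 * β * Real.exp (-(2 * π) ^ 2 * β / 2)) ∧
    ∃ c C β₁ : ℝ, 0 < c ∧ 0 < C ∧ ∀ β : ℝ, β₁ ≤ β →
      c * β * Real.exp (-(2 * π) ^ 2 * β / 2) ≤ Merr β ∧
      Merr β ≤ C * β * Real.exp (-(2 * π) ^ 2 * β / 2) := by
  constructor
  · exact fun β hβ => merr_lb hβ
  · exact ⟨2, 12 * π ^ 2, 1 / 3, by norm_num, by positivity,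
      fun β hβ => ⟨merr_lb hβ, merr_ub hβ⟩⟩
end
end

section
/- For every β > 0 there exists a finite constant K such that for all β̂ ≥ β and all a ∈ ℝ, T^{IG}(a, β̂) ≤ K · Var^{IG}(a, β̂); that is, the supremum over β̂ ≥ β and a ∈ ℝ of the ratio T^{IG}(a,β̂)/Var^{IG}(a,β̂) is finite. -/
noncomputable section
open Real

/-- Third centred absolute moment of the integer-valued Gaussian with parameters `(a, β)`. -/
def TIG (a β : ℝ) : ℝ :=
  (∑' n : ℤ, |(n : ℝ) - muIG a β| ^ 3 * Real.exp (-β * ((n : ℝ) - a) ^ 2 / 2)) / ZIG a β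



/-- Summability over ℕ of `(n+q)^k * exp(-b(n-c)^2/2)`. -/
lemma IG_summable_nat (b c q : ℝ) (hb : 0 < b) (hq : 0 ≤ q) (k : ℕ) :
    Summable fun n : ℕ => ((n : ℝ) + q) ^ k * Real.exp (-b * ((n : ℝ) - c) ^ 2 / 2) := by
  have hr : ‖Real.exp (-1)‖ < 1 := by
    rw [Real.norm_eq_abs, abs_of_pos (Real.exp_pos _)]
    exact Real.exp_lt_one_iff.mpr (by norm_num)
  have h1 : Summable fun n : ℕ => ((n : ℝ) ^ k * Real.exp (-1) ^ n) :=
    summable_pow_mul_geometric_of_norm_lt_one k hr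
  have h2 : Summable fun n : ℕ => Real.exp (-1) ^ n :=
    summable_geometric_of_lt_one (Real.exp_pos _).le
      (by rwa [Real.norm_eq_abs, abs_of_pos (Real.exp_pos _)] at hr)
  set A : ℝ := (1 + q) ^ k * Real.exp ((b * c + 1) ^ 2 / (2 * b)) with hA
  have hmaj : Summable fun n : ℕ =>
      A * ((2:ℝ) ^ k * ((n : ℝ) ^ k * Real.exp (-1) ^ n) + Real.exp (-1) ^ n) :=
    ((h1.mul_left _).add h2).mul_left A
  apply Summable.of_nonneg_of_le (fun n => by positivity) (fun n => ?_) hmaj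
  have hpow1 : ((n : ℝ) + q) ^ k ≤ (1 + q) ^ k * (((n:ℝ) + 1) ^ k) := by
    rw [← mul_pow]
    apply pow_le_pow_left₀ (by positivity)
    have : (0:ℝ) ≤ (n:ℝ) := Nat.cast_nonneg n
    nlinarith
  have hpow2 : ((n : ℝ) + 1) ^ k ≤ 2 ^ k * (n : ℝ) ^ k + 1 := by
    rcases Nat.eq_zero_or_pos n with h | h
    · subst h
      rcases Nat.eq_zero_or_pos k with hk | hk
      · subst hk; norm_num
      · simp [zero_pow hk.ne']
    · have h1n : (1:ℝ) ≤ (n:ℝ) := by exact_mod_cast h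
      calc ((n : ℝ) + 1) ^ k ≤ (2 * (n:ℝ)) ^ k := by
            apply pow_le_pow_left₀ (by positivity); linarith
        _ = 2 ^ k * (n:ℝ) ^ k := by rw [mul_pow]
        _ ≤ 2 ^ k * (n : ℝ) ^ k + 1 := by linarith
  have hexp : Real.exp (-b * ((n : ℝ) - c) ^ 2 / 2) ≤
      Real.exp ((b * c + 1) ^ 2 / (2 * b)) * Real.exp (-1) ^ n := by
    have : Real.exp (-1) ^ n = Real.exp (-(n:ℝ)) := by
      rw [← Real.exp_nat_mul]; ring_nf
    rw [this, ← Real.exp_add]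
    apply Real.exp_le_exp.mpr
    have h0 : 0 ≤ ((b * (n:ℝ) - (b * c + 1)) ^ 2 + (b * c) ^ 2) / (2 * b) := by positivity
    have heq : (b * c + 1) ^ 2 / (2 * b) + -(n:ℝ) - (-b * ((n : ℝ) - c) ^ 2 / 2) =
        ((b * (n:ℝ) - (b * c + 1)) ^ 2 + (b * c) ^ 2) / (2 * b) := by
      field_simp
      ring
    linarith
  calc ((n : ℝ) + q) ^ k * Real.exp (-b * ((n : ℝ) - c) ^ 2 / 2)
      ≤ ((1 + q) ^ k * (2 ^ k * (n : ℝ) ^ k + 1)) *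
        (Real.exp ((b * c + 1) ^ 2 / (2 * b)) * Real.exp (-1) ^ n) := by
        apply mul_le_mul _ hexp (Real.exp_pos _).le (by positivity)
        exact hpow1.trans (mul_le_mul_of_nonneg_left hpow2 (by positivity))
    _ = A * ((2:ℝ) ^ k * ((n : ℝ) ^ k * Real.exp (-1) ^ n) + Real.exp (-1) ^ n) := by
        rw [hA]; ring

/-- Summability over ℤ of `(|n|+q)^k * exp(-b(n-c)^2/2)`. -/
lemma IG_summable_master (b c q : ℝ) (hb : 0 < b) (hq : 0 ≤ q) (k : ℕ) :
    Summable fun n : ℤ => (|(n : ℝ)| + q) ^ k * Real.exp (-b * ((n : ℝ) - c) ^ 2 / 2) := by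
  apply Summable.of_nat_of_neg
  · have := IG_summable_nat b c q hb hq k
    apply this.congr
    intro n
    simp [Nat.abs_cast]
  · have := IG_summable_nat b (-c) q hb hq k
    apply this.congr
    intro n
    push_cast
    rw [abs_neg, Nat.abs_cast]
    congr 2
    ring

lemma IG_summable_poly (b a m : ℝ) (hb : 0 < b) (k : ℕ) :
    Summable fun n : ℤ => |(n : ℝ) - m| ^ k * Real.exp (-b * ((n : ℝ) - a) ^ 2 / 2) := by
  apply Summable.of_nonneg_of_le (fun n => by positivity) (fun n => ?_)
    (IG_summable_master b a |m| hb (abs_nonneg m) k)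
  apply mul_le_mul_of_nonneg_right _ (Real.exp_pos _).le
  apply pow_le_pow_left₀ (abs_nonneg _)
  calc |(n:ℝ) - m| ≤ |(n:ℝ)| + |m| := abs_sub _ _

/-- Decay coefficient `exp(-β |t|(|t|-1)/2)`. -/
def hcoef (β : ℝ) (t : ℤ) : ℝ := Real.exp (-β * (|(t : ℝ)| * (|(t : ℝ)| - 1)) / 2)

lemma hcoef_pos (β : ℝ) (t : ℤ) : 0 < hcoef β t := Real.exp_pos _

lemma abs_mul_abs_sub_one_nonneg (t : ℤ) : 0 ≤ |(t : ℝ)| * (|(t : ℝ)| - 1) := by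
  rcases eq_or_ne t 0 with h | h
  · simp [h]
  · have h1 : (1 : ℤ) ≤ |t| := Int.one_le_abs h
    have h2 : (1 : ℝ) ≤ |(t : ℝ)| := by
      rw [← Int.cast_abs]; exact_mod_cast h1
    nlinarith

/-- Summability of `(|t|+q)^k * hcoef β t` over `ℤ`. -/
lemma summable_hcoef (β : ℝ) (hβ : 0 < β) (q : ℝ) (hq : 0 ≤ q) (k : ℕ) :
    Summable fun t : ℤ => (|(t : ℝ)| + q) ^ k * hcoef β t := by
  have master := (IG_summable_master (β / 2) 0 q (by linarith) hq k).mul_left (Real.exp (β / 4))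
  apply Summable.of_nonneg_of_le
    (fun t => mul_nonneg (by positivity) (hcoef_pos β t).le) (fun t => ?_) master
  have hexp : hcoef β t ≤ Real.exp (β / 4) * Real.exp (-(β / 2) * ((t : ℝ) - 0) ^ 2 / 2) := by
    rw [hcoef, ← Real.exp_add]
    apply Real.exp_le_exp.mpr
    have h1 : ((t : ℝ) - 0) ^ 2 = |(t : ℝ)| ^ 2 := by rw [sub_zero, sq_abs]
    rw [h1]
    nlinarith [sq_nonneg (|(t : ℝ)| - 1)]
  calc (|(t : ℝ)| + q) ^ k * hcoef β t
      ≤ (|(t : ℝ)| + q) ^ k * (Real.exp (β / 4) * Real.exp (-(β / 2) * ((t : ℝ) - 0) ^ 2 / 2)) :=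
        mul_le_mul_of_nonneg_left hexp (by positivity)
    _ = Real.exp (β / 4) * ((|(t : ℝ)| + q) ^ k * Real.exp (-(β / 2) * ((t : ℝ) - 0) ^ 2 / 2)) := by
        ring

/-- central arithmetic inequality (relative to the rounded point). -/
lemma center_ineq (t α : ℝ) (hα : |α| ≤ 2⁻¹) :
    |t| * (|t| - 1) ≤ (t - α) ^ 2 - α ^ 2 := by
  have h1 : 2 * t * α ≤ |t| := by
    calc 2 * t * α ≤ |2 * t * α| := le_abs_self _
      _ = 2 * |t| * |α| := by rw [abs_mul, abs_mul]; simp [abs_of_nonneg]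
      _ ≤ 2 * |t| * 2⁻¹ := by
          apply mul_le_mul_of_nonneg_left hα (by positivity)
      _ = |t| := by ring
  nlinarith [sq_abs t]

/-- side arithmetic inequality (relative to the neighbour `r+1`). -/
lemma side_ineq (t α : ℝ) (ht : 1 ≤ |t|) (h0 : 0 ≤ α) (h1 : α ≤ 2⁻¹) :
    |t| * (|t| - 1) ≤ (t - α) ^ 2 - (1 - α) ^ 2 := by
  rcases abs_cases t with ⟨h, h'⟩ | ⟨h, h'⟩ <;> rw [h] at ht ⊢
  · nlinarith [mul_nonneg (by linarith : (0:ℝ) ≤ t - 1) (by linarith : (0:ℝ) ≤ 1 - 2 * α)]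
  · nlinarith [mul_nonneg h0 (by linarith : (0:ℝ) ≤ 1 - t)]

lemma side_ineq' (t α : ℝ) (ht : 1 ≤ |t|) (h0 : -2⁻¹ ≤ α) (h1 : α ≤ 0) :
    |t| * (|t| - 1) ≤ (t - α) ^ 2 - (-1 - α) ^ 2 := by
  have := side_ineq (-t) (-α) (by rwa [abs_neg]) (by linarith) (by linarith)
  rw [abs_neg] at this
  nlinarith [this]
lemma tsum_shift (g : ℤ → ℝ) (r : ℤ) : ∑' n : ℤ, g (n - r) = ∑' t : ℤ, g t := by
  simpa using (Equiv.subRight r).tsum_eq g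

lemma summable_shift {g : ℤ → ℝ} (hg : Summable g) (r : ℤ) :
    Summable fun n : ℤ => g (n - r) := by
  exact (Equiv.subRight r).summable_iff.mpr hg

def IGC1 (β : ℝ) : ℝ := ∑' t : ℤ, (|(t : ℝ)| + 2⁻¹) * hcoef β t

def IGC3 (β : ℝ) : ℝ :=
  ∑' t : ℤ, (|(t : ℝ)| + (2⁻¹ + IGC1 β)) ^ 3 * hcoef β t

lemma IGC1_nonneg (β : ℝ) : 0 ≤ IGC1 β :=
  tsum_nonneg fun t => mul_nonneg (by positivity) (hcoef_pos β t).le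

lemma IGC3_nonneg (β : ℝ) : 0 ≤ IGC3 β :=
  tsum_nonneg fun t => mul_nonneg (pow_nonneg (by have := IGC1_nonneg β; positivity) 3) (hcoef_pos β t).le

lemma IGC1_summable (β : ℝ) (hβ : 0 < β) :
    Summable fun t : ℤ => (|(t : ℝ)| + 2⁻¹) * hcoef β t := by
  simpa using summable_hcoef β hβ 2⁻¹ (by norm_num) 1

lemma IGC3_summable (β : ℝ) (hβ : 0 < β) :
    Summable fun t : ℤ => (|(t : ℝ)| + (2⁻¹ + IGC1 β)) ^ 3 * hcoef β t :=
  summable_hcoef β hβ _ (by have := IGC1_nonneg β; positivity) 3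

lemma round_cast_abs (n r : ℤ) : |((n - r : ℤ) : ℝ)| = |(n : ℝ) - (r : ℝ)| := by
  push_cast; ring_nf

/-- Central weight bound: every weight is dominated by the weight at `round a`
times a decay factor that only depends on `β`. -/
lemma wbd_center (β βh a : ℝ) (hβ : 0 < β) (hβh : β ≤ βh) (n : ℤ) :
    Real.exp (-βh * ((n : ℝ) - a) ^ 2 / 2) ≤
      Real.exp (-βh * (((round a : ℤ) : ℝ) - a) ^ 2 / 2) * hcoef β (n - round a) := by
  have hβh0 : 0 < βh := lt_of_lt_of_le hβ hβh
  rw [hcoef, ← Real.exp_add]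
  apply Real.exp_le_exp.mpr
  rw [round_cast_abs]
  set T := |(n : ℝ) - ((round a : ℤ) : ℝ)| with hT
  have hα : |a - ((round a : ℤ) : ℝ)| ≤ 2⁻¹ := by
    have := abs_sub_round a
    norm_num at this ⊢
    exact this
  have key : T * (T - 1) ≤ ((n : ℝ) - a) ^ 2 - (((round a : ℤ) : ℝ) - a) ^ 2 := by
    have h := center_ineq ((n : ℝ) - ((round a : ℤ) : ℝ)) (a - ((round a : ℤ) : ℝ)) hα
    have e1 : ((n : ℝ) - a) ^ 2 =
        (((n : ℝ) - ((round a : ℤ) : ℝ)) - (a - ((round a : ℤ) : ℝ))) ^ 2 := by ring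
    have e2 : (((round a : ℤ) : ℝ) - a) ^ 2 = (a - ((round a : ℤ) : ℝ)) ^ 2 := by ring
    rw [e1, e2]
    exact h
  have h0 : 0 ≤ T * (T - 1) := by
    have := abs_mul_abs_sub_one_nonneg (n - round a)
    rwa [round_cast_abs] at this
  have h1 : βh * (T * (T - 1)) ≤ βh * (((n : ℝ) - a) ^ 2 - (((round a : ℤ) : ℝ) - a) ^ 2) :=
    mul_le_mul_of_nonneg_left key hβh0.le
  have h2 : β * (T * (T - 1)) ≤ βh * (T * (T - 1)) :=
    mul_le_mul_of_nonneg_right hβh h0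
  linarith

/-- Side weight bound (right neighbour), for `round a ≤ a`. -/
lemma wbd_side (β βh a : ℝ) (hβ : 0 < β) (hβh : β ≤ βh) (n : ℤ) (hn : n ≠ round a)
    (ha : ((round a : ℤ) : ℝ) ≤ a) :
    Real.exp (-βh * ((n : ℝ) - a) ^ 2 / 2) ≤
      Real.exp (-βh * (((round a + 1 : ℤ) : ℝ) - a) ^ 2 / 2) * hcoef β (n - round a) := by
  have hβh0 : 0 < βh := lt_of_lt_of_le hβ hβh
  rw [hcoef, ← Real.exp_add]
  apply Real.exp_le_exp.mpr
  rw [round_cast_abs]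
  set T := |(n : ℝ) - ((round a : ℤ) : ℝ)| with hT
  have hα : |a - ((round a : ℤ) : ℝ)| ≤ 2⁻¹ := by
    have := abs_sub_round a
    norm_num at this ⊢
    exact this
  have hT1 : 1 ≤ T := by
    rw [hT, ← round_cast_abs]
    have : (1 : ℤ) ≤ |n - round a| := Int.one_le_abs (sub_ne_zero.mpr hn)
    rw [← Int.cast_abs]
    exact_mod_cast this
  have key : T * (T - 1) ≤ ((n : ℝ) - a) ^ 2 - (((round a + 1 : ℤ) : ℝ) - a) ^ 2 := by
    have h := side_ineq ((n : ℝ) - ((round a : ℤ) : ℝ)) (a - ((round a : ℤ) : ℝ)) hT1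
      (by linarith) (abs_le.mp hα).2
    have e1 : ((n : ℝ) - a) ^ 2 =
        (((n : ℝ) - ((round a : ℤ) : ℝ)) - (a - ((round a : ℤ) : ℝ))) ^ 2 := by ring
    have e2 : (((round a + 1 : ℤ) : ℝ) - a) ^ 2 =
        (1 - (a - ((round a : ℤ) : ℝ))) ^ 2 := by push_cast; ring
    rw [e1, e2]
    exact h
  have h0 : 0 ≤ T * (T - 1) := by
    have := abs_mul_abs_sub_one_nonneg (n - round a)
    rwa [round_cast_abs] at this
  have h1 : βh * (T * (T - 1)) ≤
      βh * (((n : ℝ) - a) ^ 2 - (((round a + 1 : ℤ) : ℝ) - a) ^ 2) :=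
    mul_le_mul_of_nonneg_left key hβh0.le
  have h2 : β * (T * (T - 1)) ≤ βh * (T * (T - 1)) :=
    mul_le_mul_of_nonneg_right hβh h0
  linarith

/-- Side weight bound (left neighbour), for `a ≤ round a`. -/
lemma wbd_side' (β βh a : ℝ) (hβ : 0 < β) (hβh : β ≤ βh) (n : ℤ) (hn : n ≠ round a)
    (ha : a ≤ ((round a : ℤ) : ℝ)) :
    Real.exp (-βh * ((n : ℝ) - a) ^ 2 / 2) ≤
      Real.exp (-βh * (((round a - 1 : ℤ) : ℝ) - a) ^ 2 / 2) * hcoef β (n - round a) := by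
  have hβh0 : 0 < βh := lt_of_lt_of_le hβ hβh
  rw [hcoef, ← Real.exp_add]
  apply Real.exp_le_exp.mpr
  rw [round_cast_abs]
  set T := |(n : ℝ) - ((round a : ℤ) : ℝ)| with hT
  have hα : |a - ((round a : ℤ) : ℝ)| ≤ 2⁻¹ := by
    have := abs_sub_round a
    norm_num at this ⊢
    exact this
  have hT1 : 1 ≤ T := by
    rw [hT, ← round_cast_abs]
    have : (1 : ℤ) ≤ |n - round a| := Int.one_le_abs (sub_ne_zero.mpr hn)
    rw [← Int.cast_abs]
    exact_mod_cast this
  have key : T * (T - 1) ≤ ((n : ℝ) - a) ^ 2 - (((round a - 1 : ℤ) : ℝ) - a) ^ 2 := by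
    have h := side_ineq' ((n : ℝ) - ((round a : ℤ) : ℝ)) (a - ((round a : ℤ) : ℝ)) hT1
      (by have := (abs_le.mp hα).1; linarith) (by linarith)
    have e1 : ((n : ℝ) - a) ^ 2 =
        (((n : ℝ) - ((round a : ℤ) : ℝ)) - (a - ((round a : ℤ) : ℝ))) ^ 2 := by ring
    have e2 : (((round a - 1 : ℤ) : ℝ) - a) ^ 2 =
        (-1 - (a - ((round a : ℤ) : ℝ))) ^ 2 := by push_cast; ring
    rw [e1, e2]
    exact h
  have h0 : 0 ≤ T * (T - 1) := by
    have := abs_mul_abs_sub_one_nonneg (n - round a)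
    rwa [round_cast_abs] at this
  have h1 : βh * (T * (T - 1)) ≤
      βh * (((n : ℝ) - a) ^ 2 - (((round a - 1 : ℤ) : ℝ) - a) ^ 2) :=
    mul_le_mul_of_nonneg_left key hβh0.le
  have h2 : β * (T * (T - 1)) ≤ βh * (T * (T - 1)) :=
    mul_le_mul_of_nonneg_right hβh h0
  linarith
lemma ZIG_pos (a βh : ℝ) (h : 0 < βh) : 0 < ZIG a βh := by
  have hE_sum : Summable (fun n : ℤ => Real.exp (-βh * ((n : ℝ) - a) ^ 2 / 2)) := by
    simpa using IG_summable_poly βh a 0 h 0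
  rw [ZIG]
  exact Summable.tsum_pos hE_sum (fun n => (Real.exp_pos _).le) 0 (Real.exp_pos _)

lemma exp_le_ZIG (a βh : ℝ) (h : 0 < βh) (n : ℤ) :
    Real.exp (-βh * ((n : ℝ) - a) ^ 2 / 2) ≤ ZIG a βh := by
  have hE_sum : Summable (fun n : ℤ => Real.exp (-βh * ((n : ℝ) - a) ^ 2 / 2)) := by
    simpa using IG_summable_poly βh a 0 h 0
  rw [ZIG]
  exact Summable.le_tsum hE_sum n fun j _ => (Real.exp_pos _).le

/-- The mean of the integer Gaussian is within `IGC1 β` of `a`. -/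
lemma mean_close (β βh a : ℝ) (hβ : 0 < β) (hβh : β ≤ βh) : |muIG a βh - a| ≤ IGC1 β := by
  have hβh0 : 0 < βh := lt_of_lt_of_le hβ hβh
  have hE_sum : Summable (fun n : ℤ => Real.exp (-βh * ((n : ℝ) - a) ^ 2 / 2)) := by
    simpa using IG_summable_poly βh a 0 hβh0 0
  have habs_sum : Summable (fun n : ℤ => |(n : ℝ) - a| * Real.exp (-βh * ((n : ℝ) - a) ^ 2 / 2)) := by
    simpa using IG_summable_poly βh a a hβh0 1
  have hn_sum : Summable (fun n : ℤ => (n : ℝ) * Real.exp (-βh * ((n : ℝ) - a) ^ 2 / 2)) := by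
    apply Summable.of_abs
    have h := IG_summable_poly βh a 0 hβh0 1
    simp only [sub_zero, pow_one] at h
    apply h.congr
    intro n
    rw [abs_mul, abs_of_pos (Real.exp_pos _)]
  have hsub_sum : Summable (fun n : ℤ => ((n : ℝ) - a) * Real.exp (-βh * ((n : ℝ) - a) ^ 2 / 2)) := by
    apply Summable.of_abs
    apply habs_sum.congr
    intro n
    rw [abs_mul, abs_of_pos (Real.exp_pos _)]
  have hZ : 0 < ZIG a βh := ZIG_pos a βh hβh0
  have key : muIG a βh - a =
      (∑' n : ℤ, ((n : ℝ) - a) * Real.exp (-βh * ((n : ℝ) - a) ^ 2 / 2)) / ZIG a βh := by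
    rw [muIG, eq_div_iff hZ.ne', sub_mul, div_mul_cancel₀ _ hZ.ne']
    rw [ZIG, ← tsum_mul_left, ← Summable.tsum_sub hn_sum (hE_sum.mul_left a)]
    exact tsum_congr fun n => by ring
  rw [key, abs_div, abs_of_pos hZ, div_le_iff₀ hZ]
  have h1 : |∑' n : ℤ, ((n : ℝ) - a) * Real.exp (-βh * ((n : ℝ) - a) ^ 2 / 2)| ≤
      ∑' n : ℤ, |(n : ℝ) - a| * Real.exp (-βh * ((n : ℝ) - a) ^ 2 / 2) := by
    have h := norm_tsum_le_tsum_norm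
      (f := fun n : ℤ => ((n : ℝ) - a) * Real.exp (-βh * ((n : ℝ) - a) ^ 2 / 2))
      (by simpa [Real.norm_eq_abs, abs_mul, abs_of_pos (Real.exp_pos _)] using habs_sum)
    simpa [Real.norm_eq_abs, abs_mul, abs_of_pos (Real.exp_pos _)] using h
  have hmaj_sum : Summable (fun n : ℤ =>
      ((|((n - round a : ℤ) : ℝ)| + 2⁻¹) * hcoef β (n - round a)) *
        Real.exp (-βh * (((round a : ℤ) : ℝ) - a) ^ 2 / 2)) :=
    (summable_shift (IGC1_summable β hβ) (round a)).mul_right _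
  have h2 : (∑' n : ℤ, |(n : ℝ) - a| * Real.exp (-βh * ((n : ℝ) - a) ^ 2 / 2)) ≤
      IGC1 β * Real.exp (-βh * (((round a : ℤ) : ℝ) - a) ^ 2 / 2) := by
    have hle := Summable.tsum_le_tsum (f := fun n : ℤ => |(n : ℝ) - a| * Real.exp (-βh * ((n : ℝ) - a) ^ 2 / 2))
      (g := fun n : ℤ => ((|((n - round a : ℤ) : ℝ)| + 2⁻¹) * hcoef β (n - round a)) *
        Real.exp (-βh * (((round a : ℤ) : ℝ) - a) ^ 2 / 2)) ?_ habs_sum hmaj_sum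
    · refine hle.trans (le_of_eq ?_)
      rw [tsum_mul_right]
      congr 1
      exact tsum_shift (fun t => (|(t : ℝ)| + 2⁻¹) * hcoef β t) (round a)
    · intro n
      have hdist : |(n : ℝ) - a| ≤ |((n - round a : ℤ) : ℝ)| + 2⁻¹ := by
        rw [round_cast_abs]
        have hra : |((round a : ℤ) : ℝ) - a| ≤ 2⁻¹ := by
          rw [abs_sub_comm]
          have := abs_sub_round a
          norm_num at this ⊢
          exact this
        calc |(n : ℝ) - a| ≤ |(n : ℝ) - ((round a : ℤ) : ℝ)| + |((round a : ℤ) : ℝ) - a| :=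
              abs_sub_le _ _ _
          _ ≤ |(n : ℝ) - ((round a : ℤ) : ℝ)| + 2⁻¹ := by linarith
      calc |(n : ℝ) - a| * Real.exp (-βh * ((n : ℝ) - a) ^ 2 / 2)
          ≤ (|((n - round a : ℤ) : ℝ)| + 2⁻¹) *
            (Real.exp (-βh * (((round a : ℤ) : ℝ) - a) ^ 2 / 2) * hcoef β (n - round a)) := by
            apply mul_le_mul hdist (wbd_center β βh a hβ hβh n) (Real.exp_pos _).le (by positivity)
        _ = ((|((n - round a : ℤ) : ℝ)| + 2⁻¹) * hcoef β (n - round a)) *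
            Real.exp (-βh * (((round a : ℤ) : ℝ) - a) ^ 2 / 2) := by ring
  calc |∑' n : ℤ, ((n : ℝ) - a) * Real.exp (-βh * ((n : ℝ) - a) ^ 2 / 2)|
      ≤ IGC1 β * Real.exp (-βh * (((round a : ℤ) : ℝ) - a) ^ 2 / 2) := h1.trans h2
    _ ≤ IGC1 β * ZIG a βh :=
        mul_le_mul_of_nonneg_left (exp_le_ZIG a βh hβh0 _) (IGC1_nonneg β)
lemma IG_core (β βh a : ℝ) (hβ : 0 < β) (hβh : β ≤ βh) :
    (∑' n : ℤ, |(n : ℝ) - muIG a βh| ^ 3 * Real.exp (-βh * ((n : ℝ) - a) ^ 2 / 2)) ≤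
      (2⁻¹ + 4 * IGC3 β) *
        (∑' n : ℤ, ((n : ℝ) - muIG a βh) ^ 2 * Real.exp (-βh * ((n : ℝ) - a) ^ 2 / 2)) := by
  have hβh0 : 0 < βh := lt_of_lt_of_le hβ hβh
  set m : ℝ := muIG a βh with hm
  have hq0 : (0:ℝ) ≤ 2⁻¹ + IGC1 β := by have := IGC1_nonneg β; linarith
  have hS3_sum : Summable (fun n : ℤ => |(n : ℝ) - m| ^ 3 * Real.exp (-βh * ((n : ℝ) - a) ^ 2 / 2)) :=
    IG_summable_poly βh a m hβh0 3
  have hS2_sum : Summable (fun n : ℤ => ((n : ℝ) - m) ^ 2 * Real.exp (-βh * ((n : ℝ) - a) ^ 2 / 2)) := by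
    have h := IG_summable_poly βh a m hβh0 2
    apply h.congr
    intro n
    rw [sq_abs]
  have hS2_nonneg : 0 ≤ ∑' n : ℤ, ((n : ℝ) - m) ^ 2 * Real.exp (-βh * ((n : ℝ) - a) ^ 2 / 2) :=
    tsum_nonneg fun n => by positivity
  have hq3 : ∀ n : ℤ, |(n : ℝ) - m| ≤ |((n - round a : ℤ) : ℝ)| + (2⁻¹ + IGC1 β) := by
    intro n
    rw [round_cast_abs]
    have h1 : |((round a : ℤ) : ℝ) - a| ≤ 2⁻¹ := by
      rw [abs_sub_comm]
      have := abs_sub_round a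
      norm_num at this ⊢
      exact this
    have h2 : |a - m| ≤ IGC1 β := by
      rw [abs_sub_comm, hm]
      exact mean_close β βh a hβ hβh
    calc |(n : ℝ) - m| ≤ |(n : ℝ) - ((round a : ℤ) : ℝ)| + |((round a : ℤ) : ℝ) - m| :=
          abs_sub_le _ _ _
      _ ≤ |(n : ℝ) - ((round a : ℤ) : ℝ)| +
          (|((round a : ℤ) : ℝ) - a| + |a - m|) := by
          linarith [abs_sub_le ((round a : ℤ) : ℝ) a m]
      _ ≤ |(n : ℝ) - ((round a : ℤ) : ℝ)| + (2⁻¹ + IGC1 β) := by linarith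
  obtain ⟨n₁, hn₁, hpt⟩ : ∃ n₁ : ℤ, 2⁻¹ ≤ |(n₁ : ℝ) - m| ∧ ∀ n : ℤ,
      |(n : ℝ) - m| ^ 3 * Real.exp (-βh * ((n : ℝ) - a) ^ 2 / 2) ≤
        2⁻¹ * (((n : ℝ) - m) ^ 2 * Real.exp (-βh * ((n : ℝ) - a) ^ 2 / 2)) +
        Real.exp (-βh * ((n₁ : ℝ) - a) ^ 2 / 2) *
          ((|((n - round a : ℤ) : ℝ)| + (2⁻¹ + IGC1 β)) ^ 3 * hcoef β (n - round a)) := by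
    by_cases hB : 2⁻¹ ≤ |((round a : ℤ) : ℝ) - m|
    · refine ⟨round a, hB, fun n => ?_⟩
      refine le_trans ?_ (le_add_of_nonneg_left (by positivity))
      calc |(n : ℝ) - m| ^ 3 * Real.exp (-βh * ((n : ℝ) - a) ^ 2 / 2)
          ≤ (|((n - round a : ℤ) : ℝ)| + (2⁻¹ + IGC1 β)) ^ 3 *
            (Real.exp (-βh * (((round a : ℤ) : ℝ) - a) ^ 2 / 2) * hcoef β (n - round a)) :=
            mul_le_mul (pow_le_pow_left₀ (abs_nonneg _) (hq3 n) 3)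
              (wbd_center β βh a hβ hβh n) (Real.exp_pos _).le (by positivity)
        _ = Real.exp (-βh * (((round a : ℤ) : ℝ) - a) ^ 2 / 2) *
            ((|((n - round a : ℤ) : ℝ)| + (2⁻¹ + IGC1 β)) ^ 3 * hcoef β (n - round a)) := by
            ring
    · push_neg at hB
      have hBabs := abs_lt.mp hB
      by_cases hside : ((round a : ℤ) : ℝ) ≤ a
      · refine ⟨round a + 1, ?_, fun n => ?_⟩
        · have hcast : ((round a + 1 : ℤ) : ℝ) = ((round a : ℤ) : ℝ) + 1 := by push_cast; ring
          rw [hcast, le_abs]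
          left
          linarith [hBabs.1]
        · by_cases hn : n = round a
          · subst hn
            refine le_trans ?_ (le_add_of_nonneg_right (mul_nonneg (Real.exp_pos _).le
              (mul_nonneg (pow_nonneg (by have := hq0; positivity) 3) (hcoef_pos _ _).le)))
            have h2 : |((round a : ℤ) : ℝ) - m| ^ 3 ≤ 2⁻¹ * (((round a : ℤ) : ℝ) - m) ^ 2 := by
              calc |((round a : ℤ) : ℝ) - m| ^ 3
                  = |((round a : ℤ) : ℝ) - m| * |((round a : ℤ) : ℝ) - m| ^ 2 := by ring
                _ ≤ 2⁻¹ * |((round a : ℤ) : ℝ) - m| ^ 2 :=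
                    mul_le_mul_of_nonneg_right hB.le (by positivity)
                _ = 2⁻¹ * (((round a : ℤ) : ℝ) - m) ^ 2 := by rw [sq_abs]
            calc |((round a : ℤ) : ℝ) - m| ^ 3 * Real.exp (-βh * (((round a : ℤ) : ℝ) - a) ^ 2 / 2)
                ≤ (2⁻¹ * (((round a : ℤ) : ℝ) - m) ^ 2) *
                  Real.exp (-βh * (((round a : ℤ) : ℝ) - a) ^ 2 / 2) :=
                  mul_le_mul_of_nonneg_right h2 (Real.exp_pos _).le
              _ = 2⁻¹ * ((((round a : ℤ) : ℝ) - m) ^ 2 *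
                  Real.exp (-βh * (((round a : ℤ) : ℝ) - a) ^ 2 / 2)) := by ring
          · refine le_trans ?_ (le_add_of_nonneg_left (by positivity))
            calc |(n : ℝ) - m| ^ 3 * Real.exp (-βh * ((n : ℝ) - a) ^ 2 / 2)
                ≤ (|((n - round a : ℤ) : ℝ)| + (2⁻¹ + IGC1 β)) ^ 3 *
                  (Real.exp (-βh * (((round a + 1 : ℤ) : ℝ) - a) ^ 2 / 2) * hcoef β (n - round a)) :=
                  mul_le_mul (pow_le_pow_left₀ (abs_nonneg _) (hq3 n) 3)
                    (wbd_side β βh a hβ hβh n hn hside) (Real.exp_pos _).le (by positivity)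
              _ = Real.exp (-βh * (((round a + 1 : ℤ) : ℝ) - a) ^ 2 / 2) *
                  ((|((n - round a : ℤ) : ℝ)| + (2⁻¹ + IGC1 β)) ^ 3 * hcoef β (n - round a)) := by
                  ring
      · push_neg at hside
        refine ⟨round a - 1, ?_, fun n => ?_⟩
        · have hcast : ((round a - 1 : ℤ) : ℝ) = ((round a : ℤ) : ℝ) - 1 := by push_cast; ring
          rw [hcast, le_abs]
          right
          linarith [hBabs.2]
        · by_cases hn : n = round a
          · subst hn
            refine le_trans ?_ (le_add_of_nonneg_right (mul_nonneg (Real.exp_pos _).le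
              (mul_nonneg (pow_nonneg (by have := hq0; positivity) 3) (hcoef_pos _ _).le)))
            have h2 : |((round a : ℤ) : ℝ) - m| ^ 3 ≤ 2⁻¹ * (((round a : ℤ) : ℝ) - m) ^ 2 := by
              calc |((round a : ℤ) : ℝ) - m| ^ 3
                  = |((round a : ℤ) : ℝ) - m| * |((round a : ℤ) : ℝ) - m| ^ 2 := by ring
                _ ≤ 2⁻¹ * |((round a : ℤ) : ℝ) - m| ^ 2 :=
                    mul_le_mul_of_nonneg_right hB.le (by positivity)
                _ = 2⁻¹ * (((round a : ℤ) : ℝ) - m) ^ 2 := by rw [sq_abs]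
            calc |((round a : ℤ) : ℝ) - m| ^ 3 * Real.exp (-βh * (((round a : ℤ) : ℝ) - a) ^ 2 / 2)
                ≤ (2⁻¹ * (((round a : ℤ) : ℝ) - m) ^ 2) *
                  Real.exp (-βh * (((round a : ℤ) : ℝ) - a) ^ 2 / 2) :=
                  mul_le_mul_of_nonneg_right h2 (Real.exp_pos _).le
              _ = 2⁻¹ * ((((round a : ℤ) : ℝ) - m) ^ 2 *
                  Real.exp (-βh * (((round a : ℤ) : ℝ) - a) ^ 2 / 2)) := by ring
          · refine le_trans ?_ (le_add_of_nonneg_left (by positivity))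
            calc |(n : ℝ) - m| ^ 3 * Real.exp (-βh * ((n : ℝ) - a) ^ 2 / 2)
                ≤ (|((n - round a : ℤ) : ℝ)| + (2⁻¹ + IGC1 β)) ^ 3 *
                  (Real.exp (-βh * (((round a - 1 : ℤ) : ℝ) - a) ^ 2 / 2) * hcoef β (n - round a)) :=
                  mul_le_mul (pow_le_pow_left₀ (abs_nonneg _) (hq3 n) 3)
                    (wbd_side' β βh a hβ hβh n hn hside.le) (Real.exp_pos _).le (by positivity)
              _ = Real.exp (-βh * (((round a - 1 : ℤ) : ℝ) - a) ^ 2 / 2) *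
                  ((|((n - round a : ℤ) : ℝ)| + (2⁻¹ + IGC1 β)) ^ 3 * hcoef β (n - round a)) := by
                  ring
  -- assemble
  have hmaj1 : Summable (fun n : ℤ =>
      2⁻¹ * (((n : ℝ) - m) ^ 2 * Real.exp (-βh * ((n : ℝ) - a) ^ 2 / 2))) :=
    hS2_sum.mul_left 2⁻¹
  have hmaj2 : Summable (fun n : ℤ =>
      Real.exp (-βh * ((n₁ : ℝ) - a) ^ 2 / 2) *
        ((|((n - round a : ℤ) : ℝ)| + (2⁻¹ + IGC1 β)) ^ 3 * hcoef β (n - round a))) :=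
    (summable_shift (IGC3_summable β hβ) (round a)).mul_left _
  have hmain := Summable.tsum_le_tsum hpt hS3_sum (hmaj1.add hmaj2)
  rw [Summable.tsum_add hmaj1 hmaj2, tsum_mul_left, tsum_mul_left] at hmain
  have hshift : (∑' n : ℤ, (|((n - round a : ℤ) : ℝ)| + (2⁻¹ + IGC1 β)) ^ 3 *
      hcoef β (n - round a)) = IGC3 β := by
    rw [IGC3]
    exact tsum_shift (fun t : ℤ => (|(t : ℝ)| + (2⁻¹ + IGC1 β)) ^ 3 * hcoef β t) (round a)
  rw [hshift] at hmain
  have hlow : ((n₁ : ℝ) - m) ^ 2 * Real.exp (-βh * ((n₁ : ℝ) - a) ^ 2 / 2) ≤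
      ∑' n : ℤ, ((n : ℝ) - m) ^ 2 * Real.exp (-βh * ((n : ℝ) - a) ^ 2 / 2) :=
    Summable.le_tsum hS2_sum n₁ fun j _ => by positivity
  have h14 : (4:ℝ)⁻¹ ≤ ((n₁ : ℝ) - m) ^ 2 := by
    nlinarith [hn₁, sq_abs ((n₁ : ℝ) - m), abs_nonneg ((n₁ : ℝ) - m)]
  have hEn₁ : Real.exp (-βh * ((n₁ : ℝ) - a) ^ 2 / 2) ≤
      4 * ∑' n : ℤ, ((n : ℝ) - m) ^ 2 * Real.exp (-βh * ((n : ℝ) - a) ^ 2 / 2) := by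
    have h := mul_le_mul_of_nonneg_right h14 (Real.exp_pos (-βh * ((n₁ : ℝ) - a) ^ 2 / 2)).le
    linarith
  have hfin := mul_le_mul_of_nonneg_right hEn₁ (IGC3_nonneg β)
  nlinarith [hmain, hfin]
/-- Lemma 2.4: for every `β > 0` there is a finite constant `K` such that
`T^{IG}(a, β̂) ≤ K · Var^{IG}(a, β̂)` for all `β̂ ≥ β` and all `a ∈ ℝ`. -/
theorem TIG_le_const_mul_varIG (β : ℝ) (hβ : 0 < β) :
    ∃ K : ℝ, ∀ βhat : ℝ, β ≤ βhat → ∀ a : ℝ, TIG a βhat ≤ K * VarIG a βhat := by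
  refine ⟨2⁻¹ + 4 * IGC3 β, fun βhat hβhat a => ?_⟩
  have hβh0 : 0 < βhat := lt_of_lt_of_le hβ hβhat
  have hZ : 0 < ZIG a βhat := ZIG_pos a βhat hβh0
  rw [TIG, VarIG, ← mul_div_assoc]
  apply div_le_div_of_nonneg_right (IG_core β βhat a hβ hβhat) hZ.le
end
end
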